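/- arXiv:1508.03448 — 4 statements merged into one kernel-verified Lean document; each statement's English description precedes it below -/
import Mathlib

section
/- For every u, d ∈ ℝⁿ and every index k ∈ {1,…,n}, the one-sided directional derivative F'_k(u, d) = lim_{t→0⁺} (F_k(u + t·d) − F_k(u))/t exists and is given by: F'_k(u, d) = γ(∇²g(u)d)_k if k ∈ A(u); F'_k(u, d) = d_k if k ∈ I°(u); F'_k(u, d) = min{γ(∇²g(u)d)_k, d_k} if k ∈ I⁺(u); and F'_k(u, d) = max{γ(∇²g(u)d)_k, d_k} if k ∈ I⁻(u). -/
open scoped RealInnerProductSpace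
open Filter Topology

noncomputable section

abbrev Euc (n : ℕ) := EuclideanSpace ℝ (Fin n)

variable {n : ℕ}

/-- Componentwise soft-thresholding operator `(S_{γw}(v))_k = sgn(v_k)·max(|v_k| − γw_k, 0)`. -/
def soft (γ : ℝ) (w : Fin n → ℝ) (v : Euc n) : Euc n :=
  WithLp.toLp 2 (fun k => Real.sign (v k) * max (|v k| - γ * w k) 0)

/-- The map `F(u) = u − S_{γw}(u − γ∇g(u))`. -/
def Fm (g : Euc n → ℝ) (γ : ℝ) (w : Fin n → ℝ) (u : Euc n) : Euc n :=
  u - soft γ w (u - γ • gradient g u)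

/-- The merit functional `Θ(u) = ‖F(u)‖₂²`. -/
def Th (g : Euc n → ℝ) (γ : ℝ) (w : Fin n → ℝ) (u : Euc n) : ℝ :=
  ‖Fm g γ w u‖ ^ 2

/-- The Hessian of `g` at `u`, applied to `d`: `∇²g(u)d`. -/
def hess (g : Euc n → ℝ) (u d : Euc n) : Euc n :=
  fderiv ℝ (gradient g) u d

/-- Standing assumptions on `g`: twice continuously differentiable, Lipschitz continuous
second derivative, and uniform bounds `c₁‖h‖² ≤ ⟨∇²g(u)h, h⟩ ≤ c₂‖h‖²`. -/
structure Assump (n : ℕ) (g : Euc n → ℝ) (c₁ c₂ : ℝ) : Prop where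
  contDiff : ContDiff ℝ 2 g
  lipHess : ∃ L : NNReal, LipschitzWith L fun u => fderiv ℝ (gradient g) u
  c1_pos : 0 < c₁
  c1_le_c2 : c₁ ≤ c₂
  lower : ∀ u h : Euc n, c₁ * ‖h‖ ^ 2 ≤ ⟪hess g u h, h⟫
  upper : ∀ u h : Euc n, ⟪hess g u h, h⟫ ≤ c₂ * ‖h‖ ^ 2

/-- `A⁺(u)`. -/
def Ap (g : Euc n → ℝ) (γ : ℝ) (w : Fin n → ℝ) (u : Euc n) : Set (Fin n) :=
  {k | γ * gradient g u k + γ * w k < u k}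

/-- `A⁻(u)`. -/
def Am (g : Euc n → ℝ) (γ : ℝ) (w : Fin n → ℝ) (u : Euc n) : Set (Fin n) :=
  {k | u k < γ * gradient g u k - γ * w k}

/-- `A(u) = A⁺(u) ∪ A⁻(u)`. -/
def Aset (g : Euc n → ℝ) (γ : ℝ) (w : Fin n → ℝ) (u : Euc n) : Set (Fin n) :=
  Ap g γ w u ∪ Am g γ w u

/-- `I°(u)`. -/
def Iz (g : Euc n → ℝ) (γ : ℝ) (w : Fin n → ℝ) (u : Euc n) : Set (Fin n) :=
  {k | γ * gradient g u k - γ * w k < u k ∧ u k < γ * gradient g u k + γ * w k}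

/-- `I⁺(u)`. -/
def Ipl (g : Euc n → ℝ) (γ : ℝ) (w : Fin n → ℝ) (u : Euc n) : Set (Fin n) :=
  {k | u k = γ * gradient g u k + γ * w k}

/-- `I⁻(u)`. -/
def Imi (g : Euc n → ℝ) (γ : ℝ) (w : Fin n → ℝ) (u : Euc n) : Set (Fin n) :=
  {k | u k = γ * gradient g u k - γ * w k}

/-- `A⁺₊(u)`. -/
def App (g : Euc n → ℝ) (γ : ℝ) (w : Fin n → ℝ) (u : Euc n) : Set (Fin n) :=
  {k | γ * gradient g u k + γ * w k < u k ∧ u k < 0}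

/-- `A⁻₋(u)`. -/
def Amm (g : Euc n → ℝ) (γ : ℝ) (w : Fin n → ℝ) (u : Euc n) : Set (Fin n) :=
  {k | 0 < u k ∧ u k < γ * gradient g u k - γ * w k}

/-- `I°₊(u)`. -/
def Izp (g : Euc n → ℝ) (γ : ℝ) (w : Fin n → ℝ) (u : Euc n) : Set (Fin n) :=
  {k | γ * gradient g u k - γ * w k < u k ∧ u k < γ * gradient g u k + γ * w k ∧
    γ * gradient g u k + γ * w k < 0}

/-- `I°₋(u)`. -/
def Izm (g : Euc n → ℝ) (γ : ℝ) (w : Fin n → ℝ) (u : Euc n) : Set (Fin n) :=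
  {k | 0 < γ * gradient g u k - γ * w k ∧ γ * gradient g u k - γ * w k < u k ∧
    u k < γ * gradient g u k + γ * w k}

/-- `Ā⁺(u) = A⁺(u) \ A⁺₊(u)`. -/
def ApBar (g : Euc n → ℝ) (γ : ℝ) (w : Fin n → ℝ) (u : Euc n) : Set (Fin n) :=
  Ap g γ w u \ App g γ w u

/-- `Ā⁻(u) = A⁻(u) \ A⁻₋(u)`. -/
def AmBar (g : Euc n → ℝ) (γ : ℝ) (w : Fin n → ℝ) (u : Euc n) : Set (Fin n) :=
  Am g γ w u \ Amm g γ w u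

/-- `Ā(u) = Ā⁺(u) ∪ Ā⁻(u)`. -/
def ABar (g : Euc n → ℝ) (γ : ℝ) (w : Fin n → ℝ) (u : Euc n) : Set (Fin n) :=
  ApBar g γ w u ∪ AmBar g γ w u

/-- `Ī°(u) = I°(u) \ (I°₊(u) ∪ I°₋(u))`. -/
def IzBar (g : Euc n → ℝ) (γ : ℝ) (w : Fin n → ℝ) (u : Euc n) : Set (Fin n) :=
  Iz g γ w u \ (Izp g γ w u ∪ Izm g γ w u)

/-- `Ī⁺(u) = I⁺(u) ∪ A⁺₊(u) ∪ I°₊(u)`. -/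
def IplBar (g : Euc n → ℝ) (γ : ℝ) (w : Fin n → ℝ) (u : Euc n) : Set (Fin n) :=
  Ipl g γ w u ∪ App g γ w u ∪ Izp g γ w u

/-- `Ī⁻(u) = I⁻(u) ∪ A⁻₋(u) ∪ I°₋(u)`. -/
def ImiBar (g : Euc n → ℝ) (γ : ℝ) (w : Fin n → ℝ) (u : Euc n) : Set (Fin n) :=
  Imi g γ w u ∪ Amm g γ w u ∪ Izm g γ w u

/-- `d` is a modified Newton direction at `u`. -/
def IsModDir (g : Euc n → ℝ) (γ : ℝ) (w : Fin n → ℝ) (u d : Euc n) : Prop :=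
  (∀ k ∈ ABar g γ w u, γ * hess g u d k = - Fm g γ w u k) ∧
  (∀ k ∈ IzBar g γ w u, d k = - u k) ∧
  (∀ k ∈ IplBar g γ w u, 0 ≤ d k + u k ∧ 0 ≤ γ * hess g u d k + Fm g γ w u k ∧
    (d k + u k) * (γ * hess g u d k + Fm g γ w u k) = 0) ∧
  (∀ k ∈ ImiBar g γ w u, d k + u k ≤ 0 ∧ γ * hess g u d k + Fm g γ w u k ≤ 0 ∧
    (d k + u k) * (γ * hess g u d k + Fm g γ w u k) = 0)

/-- `d` is a B-Newton direction at `u` (unmodified index sets). -/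
def IsBDir (g : Euc n → ℝ) (γ : ℝ) (w : Fin n → ℝ) (u d : Euc n) : Prop :=
  (∀ k ∈ Aset g γ w u, γ * hess g u d k = - Fm g γ w u k) ∧
  (∀ k ∈ Iz g γ w u, d k = - u k) ∧
  (∀ k ∈ Ipl g γ w u, 0 ≤ d k + u k ∧ 0 ≤ γ * hess g u d k + Fm g γ w u k ∧
    (d k + u k) * (γ * hess g u d k + Fm g γ w u k) = 0) ∧
  (∀ k ∈ Imi g γ w u, d k + u k ≤ 0 ∧ γ * hess g u d k + Fm g γ w u k ≤ 0 ∧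
    (d k + u k) * (γ * hess g u d k + Fm g γ w u k) = 0)

/-- `t = β^l` where `l` is the smallest nonnegative integer satisfying the Armijo inequality. -/
def ArmijoStepsize (g : Euc n → ℝ) (γ : ℝ) (w : Fin n → ℝ) (β σ : ℝ) (u d : Euc n)
    (t : ℝ) : Prop :=
  ∃ l : ℕ, t = β ^ l ∧
    Th g γ w (u + (β ^ l) • d) ≤ (1 - 2 * σ * β ^ l) * Th g γ w u ∧
    ∀ l' < l, ¬ (Th g γ w (u + (β ^ l') • d) ≤ (1 - 2 * σ * β ^ l') * Th g γ w u)

/-- The modified B-semismooth Newton iteration with Armijo damping. -/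
def ModIter (g : Euc n → ℝ) (γ : ℝ) (w : Fin n → ℝ) (β σ : ℝ)
    (useq dseq : ℕ → Euc n) (tseq : ℕ → ℝ) : Prop :=
  (∀ j, IsModDir g γ w (useq j) (dseq j)) ∧
  (∀ j, ArmijoStepsize g γ w β σ (useq j) (dseq j) (tseq j)) ∧
  (∀ j, useq (j + 1) = useq j + tseq j • dseq j)

/-- The B-semismooth Newton iteration (unmodified index sets) with Armijo damping. -/
def BIter (g : Euc n → ℝ) (γ : ℝ) (w : Fin n → ℝ) (β σ : ℝ)
    (useq dseq : ℕ → Euc n) (tseq : ℕ → ℝ) : Prop :=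
  (∀ j, IsBDir g γ w (useq j) (dseq j)) ∧
  (∀ j, ArmijoStepsize g γ w β σ (useq j) (dseq j) (tseq j)) ∧
  (∀ j, useq (j + 1) = useq j + tseq j • dseq j)

private lemma sgn_max_of_gt {a x : ℝ} (ha : 0 < a) (hx : a < x) :
    Real.sign x * max (|x| - a) 0 = x - a := by
  have hx0 : 0 < x := ha.trans hx
  rw [Real.sign_of_pos hx0, abs_of_pos hx0, max_eq_left (by linarith), one_mul]

private lemma sgn_max_of_lt {a x : ℝ} (ha : 0 < a) (hx : x < -a) :
    Real.sign x * max (|x| - a) 0 = x + a := by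
  have hx0 : x < 0 := by linarith
  rw [Real.sign_of_neg hx0, abs_of_neg hx0, max_eq_left (by linarith)]; ring

private lemma sgn_max_of_abs_le {a x : ℝ} (hx : |x| ≤ a) :
    Real.sign x * max (|x| - a) 0 = 0 := by
  rw [max_eq_right (by linarith), mul_zero]

private lemma sgn_max_of_gt_neg {a x : ℝ} (ha : 0 < a) (hx : -a < x) :
    Real.sign x * max (|x| - a) 0 = max (x - a) 0 := by
  rcases le_or_gt x a with h | h
  · rw [sgn_max_of_abs_le (abs_le.mpr ⟨hx.le, h⟩), max_eq_right (by linarith)]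
  · rw [sgn_max_of_gt ha h, max_eq_left (by linarith)]

private lemma sgn_max_of_lt_pos {a x : ℝ} (ha : 0 < a) (hx : x < a) :
    Real.sign x * max (|x| - a) 0 = min (x + a) 0 := by
  rcases le_or_gt (-a) x with h | h
  · rw [sgn_max_of_abs_le (abs_le.mpr ⟨h, hx.le⟩), min_eq_right (by linarith)]
  · rw [sgn_max_of_lt ha h, min_eq_left (by linarith)]

private lemma max_div_pos {x t : ℝ} (ht : 0 < t) : max x 0 / t = max (x / t) 0 := by
  rcases le_or_gt x 0 with h | h
  · rw [max_eq_right h, max_eq_right (div_nonpos_iff.mpr (Or.inr ⟨h, ht.le⟩)), zero_div]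
  · rw [max_eq_left h.le, max_eq_left (div_pos h ht).le]

private lemma min_div_pos {x t : ℝ} (ht : 0 < t) : min x 0 / t = min (x / t) 0 := by
  rcases le_or_gt x 0 with h | h
  · rw [min_eq_left h, min_eq_left (div_nonpos_iff.mpr (Or.inr ⟨h, ht.le⟩))]
  · rw [min_eq_right h.le, min_eq_right (div_pos h ht).le, zero_div]

example : True := trivial

/-- componentwise one-sided directional derivative of `F`. -/
theorem stmt0 {n : ℕ} (hn : 1 ≤ n) (c₁ c₂ : ℝ) (g : Euc n → ℝ) (hg : Assump n g c₁ c₂)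
    (w : Fin n → ℝ) (hw : ∀ k, 0 < w k) (γ : ℝ) (hγ : 0 < γ)
    (u d : Euc n) (k : Fin n) :
    (k ∈ Aset g γ w u →
      Tendsto (fun t : ℝ => (Fm g γ w (u + t • d) k - Fm g γ w u k) / t) (𝓝[>] 0)
        (𝓝 (γ * hess g u d k))) ∧
    (k ∈ Iz g γ w u →
      Tendsto (fun t : ℝ => (Fm g γ w (u + t • d) k - Fm g γ w u k) / t) (𝓝[>] 0)
        (𝓝 (d k))) ∧
    (k ∈ Ipl g γ w u →
      Tendsto (fun t : ℝ => (Fm g γ w (u + t • d) k - Fm g γ w u k) / t) (𝓝[>] 0)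
        (𝓝 (min (γ * hess g u d k) (d k)))) ∧
    (k ∈ Imi g γ w u →
      Tendsto (fun t : ℝ => (Fm g γ w (u + t • d) k - Fm g γ w u k) / t) (𝓝[>] 0)
        (𝓝 (max (γ * hess g u d k) (d k)))) := by
  set a : ℝ := γ * w k with ha_def
  have ha : 0 < a := mul_pos hγ (hw k)
  -- differentiability of the gradient
  have h1 : ContDiff ℝ 1 (fderiv ℝ g) := hg.contDiff.fderiv_right (le_refl _)
  have hdg : Differentiable ℝ (gradient g) := by
    have : gradient g = fun x => (InnerProductSpace.toDual ℝ (Euc n)).symm (fderiv ℝ g x) := rfl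
    rw [this]
    exact (InnerProductSpace.toDual ℝ (Euc n)).symm.differentiable.comp (h1.differentiable one_ne_zero)
  have hline : HasDerivAt (fun t : ℝ => u + t • d) d 0 := by
    simpa using ((hasDerivAt_id (0:ℝ)).smul_const d).const_add u
  have hGrad : HasDerivAt (fun t : ℝ => gradient g (u + t • d)) (hess g u d) 0 := by
    have hF : HasFDerivAt (gradient g) (fderiv ℝ (gradient g) u) (u + (0:ℝ) • d) := by
      simpa using (hdg u).hasFDerivAt
    have h := hF.comp_hasDerivAt 0 hline
    exact h
  have hG : HasDerivAt (fun t : ℝ => gradient g (u + t • d) k) (hess g u d k) 0 := by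
    have h := (EuclideanSpace.proj k).hasFDerivAt.comp_hasDerivAt 0 hGrad
    exact h
  set ψ : ℝ → ℝ := fun t => u k + t * d k - γ * gradient g (u + t • d) k with hψ_def
  have hψ : HasDerivAt ψ (d k - γ * hess g u d k) 0 := by
    have h := (((hasDerivAt_id (0:ℝ)).mul_const (d k)).const_add (u k)).sub (hG.const_mul γ)
    simp only [id, one_mul] at h
    exact h
  have hψ0 : ψ 0 = u k - γ * gradient g u k := by simp [hψ_def]
  have hψc : ContinuousAt ψ 0 := hψ.continuousAt
  have hslope : Tendsto (fun t : ℝ => (ψ t - ψ 0) / t) (𝓝[>] (0:ℝ))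
      (𝓝 (d k - γ * hess g u d k)) := by
    have h := (hasDerivAt_iff_tendsto_slope.mp hψ).mono_left
      (nhdsWithin_mono 0 (fun x hx => ne_of_gt hx : Set.Ioi (0:ℝ) ⊆ {(0:ℝ)}ᶜ))
    refine h.congr fun t => ?_
    simp [slope_def_field, div_eq_inv_mul]
  have hFm : ∀ t : ℝ, Fm g γ w (u + t • d) k =
      u k + t * d k - Real.sign (ψ t) * max (|ψ t| - a) 0 := by
    intro t
    have hco : ((u + t • d) - γ • gradient g (u + t • d)) k = ψ t := by
      simp [hψ_def, PiLp.sub_apply, PiLp.add_apply, PiLp.smul_apply, smul_eq_mul]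
    simp only [Fm, soft, PiLp.toLp_apply, PiLp.sub_apply, PiLp.add_apply, PiLp.smul_apply, smul_eq_mul, hco]
    rfl
  have hFm0 : Fm g γ w u k = u k - Real.sign (ψ 0) * max (|ψ 0| - a) 0 := by
    have h := hFm 0
    simpa using h
  -- case A : |ψ 0| > a
  have caseA : ∀ _ : k ∈ Aset g γ w u,
      Tendsto (fun t : ℝ => (Fm g γ w (u + t • d) k - Fm g γ w u k) / t) (𝓝[>] 0)
        (𝓝 (γ * hess g u d k)) := by
    intro hk
    have hev : ∀ᶠ t in 𝓝[>] (0:ℝ),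
        (fun t : ℝ => d k - (ψ t - ψ 0) / t) t
        = (Fm g γ w (u + t • d) k - Fm g γ w u k) / t := by
      rcases hk with hk | hk
      · have h0 : a < ψ 0 := by
          have := hk; simp only [Ap, Set.mem_setOf_eq] at this
          rw [hψ0]; linarith
        have hmem : ψ ⁻¹' Set.Ioi a ∈ 𝓝 (0:ℝ) := hψc (Ioi_mem_nhds h0)
        filter_upwards [nhdsWithin_le_nhds hmem, self_mem_nhdsWithin] with t hψt ht
        have ht0 : (t:ℝ) ≠ 0 := ne_of_gt ht
        rw [hFm t, hFm0, sgn_max_of_gt ha hψt, sgn_max_of_gt ha h0]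
        field_simp
        ring
      · have h0 : ψ 0 < -a := by
          have := hk; simp only [Am, Set.mem_setOf_eq] at this
          rw [hψ0]; linarith
        have hmem : ψ ⁻¹' Set.Iio (-a) ∈ 𝓝 (0:ℝ) := hψc (Iio_mem_nhds h0)
        filter_upwards [nhdsWithin_le_nhds hmem, self_mem_nhdsWithin] with t hψt ht
        have ht0 : (t:ℝ) ≠ 0 := ne_of_gt ht
        rw [hFm t, hFm0, sgn_max_of_lt ha hψt, sgn_max_of_lt ha h0]
        field_simp
        ring
    have hlim : Tendsto (fun t : ℝ => d k - (ψ t - ψ 0) / t) (𝓝[>] (0:ℝ))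
        (𝓝 (d k - (d k - γ * hess g u d k))) := tendsto_const_nhds.sub hslope
    rw [show d k - (d k - γ * hess g u d k) = γ * hess g u d k by ring] at hlim
    exact hlim.congr' hev
  -- case Iz
  have caseIz : ∀ _ : k ∈ Iz g γ w u,
      Tendsto (fun t : ℝ => (Fm g γ w (u + t • d) k - Fm g γ w u k) / t) (𝓝[>] 0)
        (𝓝 (d k)) := by
    intro hk
    have h0 : -a < ψ 0 ∧ ψ 0 < a := by
      have := hk; simp only [Iz, Set.mem_setOf_eq] at this
      rw [hψ0]; constructor <;> linarith [this.1, this.2]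
    have hmem : ψ ⁻¹' Set.Ioo (-a) a ∈ 𝓝 (0:ℝ) := hψc (Ioo_mem_nhds h0.1 h0.2)
    have hev : ∀ᶠ t in 𝓝[>] (0:ℝ),
        (fun _ : ℝ => d k) t = (Fm g γ w (u + t • d) k - Fm g γ w u k) / t := by
      filter_upwards [nhdsWithin_le_nhds hmem, self_mem_nhdsWithin] with t hψt ht
      have ht0 : (t:ℝ) ≠ 0 := ne_of_gt ht
      rw [hFm t, hFm0, sgn_max_of_abs_le (abs_le.mpr ⟨hψt.1.le, hψt.2.le⟩),
        sgn_max_of_abs_le (abs_le.mpr ⟨h0.1.le, h0.2.le⟩)]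
      field_simp
      ring
    exact tendsto_const_nhds.congr' hev
  -- case Ipl : ψ 0 = a
  have caseIpl : ∀ _ : k ∈ Ipl g γ w u,
      Tendsto (fun t : ℝ => (Fm g γ w (u + t • d) k - Fm g γ w u k) / t) (𝓝[>] 0)
        (𝓝 (min (γ * hess g u d k) (d k))) := by
    intro hk
    have h0 : ψ 0 = a := by
      have := hk; simp only [Ipl, Set.mem_setOf_eq] at this
      rw [hψ0]; linarith
    have hmem : ψ ⁻¹' Set.Ioi (-a) ∈ 𝓝 (0:ℝ) := hψc (Ioi_mem_nhds (by rw [h0]; linarith))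
    have hev : ∀ᶠ t in 𝓝[>] (0:ℝ),
        (fun t : ℝ => d k - max ((ψ t - ψ 0) / t) 0) t
        = (Fm g γ w (u + t • d) k - Fm g γ w u k) / t := by
      filter_upwards [nhdsWithin_le_nhds hmem, self_mem_nhdsWithin] with t hψt ht
      have ht0 : (t:ℝ) ≠ 0 := ne_of_gt ht
      rw [hFm t, hFm0, sgn_max_of_gt_neg ha hψt, sgn_max_of_gt_neg ha (by rw [h0]; linarith),
        show max ((ψ t - ψ 0) / t) 0 = max (ψ t - a) 0 / t by rw [max_div_pos ht, h0],
        h0, sub_self, max_self]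
      field_simp
      ring
    have hlim : Tendsto (fun t : ℝ => d k - max ((ψ t - ψ 0) / t) 0) (𝓝[>] (0:ℝ))
        (𝓝 (d k - max (d k - γ * hess g u d k) 0)) :=
      tendsto_const_nhds.sub (hslope.max tendsto_const_nhds)
    rw [show d k - max (d k - γ * hess g u d k) 0 = min (γ * hess g u d k) (d k) by
      rcases le_total (γ * hess g u d k) (d k) with h | h
      · rw [min_eq_left h, max_eq_left (by linarith)]; ring
      · rw [min_eq_right h, max_eq_right (by linarith)]; ring] at hlim
    exact hlim.congr' hev
  -- case Imi : ψ 0 = -a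
  have caseImi : ∀ _ : k ∈ Imi g γ w u,
      Tendsto (fun t : ℝ => (Fm g γ w (u + t • d) k - Fm g γ w u k) / t) (𝓝[>] 0)
        (𝓝 (max (γ * hess g u d k) (d k))) := by
    intro hk
    have h0 : ψ 0 = -a := by
      have := hk; simp only [Imi, Set.mem_setOf_eq] at this
      rw [hψ0]; linarith
    have hmem : ψ ⁻¹' Set.Iio a ∈ 𝓝 (0:ℝ) := hψc (Iio_mem_nhds (by rw [h0]; linarith))
    have hev : ∀ᶠ t in 𝓝[>] (0:ℝ),
        (fun t : ℝ => d k - min ((ψ t - ψ 0) / t) 0) t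
        = (Fm g γ w (u + t • d) k - Fm g γ w u k) / t := by
      filter_upwards [nhdsWithin_le_nhds hmem, self_mem_nhdsWithin] with t hψt ht
      have ht0 : (t:ℝ) ≠ 0 := ne_of_gt ht
      rw [hFm t, hFm0, sgn_max_of_lt_pos ha hψt, sgn_max_of_lt_pos ha (by rw [h0]; linarith),
        show min ((ψ t - ψ 0) / t) 0 = min (ψ t + a) 0 / t by
          rw [min_div_pos ht, h0, sub_neg_eq_add],
        show ψ 0 + a = 0 by rw [h0]; ring, min_self]
      field_simp
      ring
    have hlim : Tendsto (fun t : ℝ => d k - min ((ψ t - ψ 0) / t) 0) (𝓝[>] (0:ℝ))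
        (𝓝 (d k - min (d k - γ * hess g u d k) 0)) :=
      tendsto_const_nhds.sub (hslope.min tendsto_const_nhds)
    rw [show d k - min (d k - γ * hess g u d k) 0 = max (γ * hess g u d k) (d k) by
      rcases le_total (γ * hess g u d k) (d k) with h | h
      · rw [max_eq_right h, min_eq_right (by linarith)]; ring
      · rw [max_eq_left h, min_eq_left (by linarith)]; ring] at hlim
    exact hlim.congr' hev
  exact ⟨caseA, caseIz, caseIpl, caseImi⟩
end
end

section
/- Let u ∈ ℝⁿ, M = ∇²g(u), and let d be the modified Newton direction at u. Then the following inequalities hold: (i) (γ(∇g(u))_k + γw_k)·γ(Md)_k ≤ −(γ(∇g(u))_k + γw_k)² for all k ∈ A⁺₊(u) ∪ I°₊(u) ∪ {k ∈ I⁺(u) : F_k(u) < 0}; (ii) (γ(∇g(u))_k − γw_k)·γ(Md)_k ≤ −(γ(∇g(u))_k − γw_k)² for all k ∈ A⁻₋(u) ∪ I°₋(u) ∪ {k ∈ I⁻(u) : F_k(u) > 0}; (iii) u_k·d_k ≤ −u_k² for all k ∈ A⁺₊(u) ∪ A⁻₋(u) ∪ I°₊(u) ∪ I°₋(u) ∪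 {k ∈ I⁺(u) : F_k(u) < 0} ∪ {k ∈ I⁻(u) : F_k(u) > 0}. -/
open scoped RealInnerProductSpace
open Filter Topology

noncomputable section

variable {n : ℕ}

lemma Fm_apply (g : Euc n → ℝ) (γ : ℝ) (w : Fin n → ℝ) (u : Euc n) (k : Fin n) :
    Fm g γ w u k = u k - Real.sign (u k - γ * gradient g u k) *
      max (|u k - γ * gradient g u k| - γ * w k) 0 := by
  simp [Fm, soft, PiLp.sub_apply, PiLp.smul_apply, smul_eq_mul]

lemma Fm_gt {g : Euc n → ℝ} {γ : ℝ} {w : Fin n → ℝ} {u : Euc n} {k : Fin n}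
    (h : γ * gradient g u k + γ * w k < u k) (hq : 0 < γ * w k) :
    Fm g γ w u k = γ * gradient g u k + γ * w k := by
  rw [Fm_apply]
  have hv : 0 < u k - γ * gradient g u k := by linarith
  rw [Real.sign_of_pos hv, abs_of_pos hv, max_eq_left (by linarith)]
  ring

lemma Fm_lt {g : Euc n → ℝ} {γ : ℝ} {w : Fin n → ℝ} {u : Euc n} {k : Fin n}
    (h : u k < γ * gradient g u k - γ * w k) (hq : 0 < γ * w k) :
    Fm g γ w u k = γ * gradient g u k - γ * w k := by
  rw [Fm_apply]
  have hv : u k - γ * gradient g u k < 0 := by linarith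
  rw [Real.sign_of_neg hv, abs_of_neg hv, max_eq_left (by linarith)]
  ring

lemma Fm_mid {g : Euc n → ℝ} {γ : ℝ} {w : Fin n → ℝ} {u : Euc n} {k : Fin n}
    (h1 : γ * gradient g u k - γ * w k ≤ u k) (h2 : u k ≤ γ * gradient g u k + γ * w k) :
    Fm g γ w u k = u k := by
  rw [Fm_apply]
  rw [max_eq_right (by rw [sub_nonpos, abs_le]; constructor <;> linarith)]
  ring

/-- inequalities satisfied by the modified Newton direction. -/
theorem stmt6 {n : ℕ} (hn : 1 ≤ n) (c₁ c₂ : ℝ) (g : Euc n → ℝ) (hg : Assump n g c₁ c₂)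
    (w : Fin n → ℝ) (hw : ∀ k, 0 < w k) (γ : ℝ) (hγ : 0 < γ)
    (u d : Euc n) (hd : IsModDir g γ w u d) :
    (∀ k : Fin n, k ∈ App g γ w u ∪ Izp g γ w u ∨ (k ∈ Ipl g γ w u ∧ Fm g γ w u k < 0) →
      (γ * gradient g u k + γ * w k) * (γ * hess g u d k)
        ≤ -(γ * gradient g u k + γ * w k) ^ 2) ∧
    (∀ k : Fin n, k ∈ Amm g γ w u ∪ Izm g γ w u ∨ (k ∈ Imi g γ w u ∧ 0 < Fm g γ w u k) →
      (γ * gradient g u k - γ * w k) * (γ * hess g u d k)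
        ≤ -(γ * gradient g u k - γ * w k) ^ 2) ∧
    (∀ k : Fin n, k ∈ App g γ w u ∪ Amm g γ w u ∪ Izp g γ w u ∪ Izm g γ w u ∨
        (k ∈ Ipl g γ w u ∧ Fm g γ w u k < 0) ∨ (k ∈ Imi g γ w u ∧ 0 < Fm g γ w u k) →
      u k * d k ≤ -(u k) ^ 2) := by
  obtain ⟨hA, hI, hIp, hIm⟩ := hd
  have hq : ∀ k : Fin n, 0 < γ * w k := fun k => mul_pos hγ (hw k)
  -- membership helpers
  have memP : ∀ k : Fin n,
      (k ∈ App g γ w u ∪ Izp g γ w u ∨ (k ∈ Ipl g γ w u ∧ Fm g γ w u k < 0)) →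
      k ∈ IplBar g γ w u := by
    intro k hk
    rcases hk with (h | h) | h
    · exact Or.inl (Or.inr h)
    · exact Or.inr h
    · exact Or.inl (Or.inl h.1)
  have memM : ∀ k : Fin n,
      (k ∈ Amm g γ w u ∪ Izm g γ w u ∨ (k ∈ Imi g γ w u ∧ 0 < Fm g γ w u k)) →
      k ∈ ImiBar g γ w u := by
    intro k hk
    rcases hk with (h | h) | h
    · exact Or.inl (Or.inr h)
    · exact Or.inr h
    · exact Or.inl (Or.inl h.1)
  -- key facts on the plus side: F ≤ p and p < 0
  have keyP : ∀ k : Fin n,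
      (k ∈ App g γ w u ∪ Izp g γ w u ∨ (k ∈ Ipl g γ w u ∧ Fm g γ w u k < 0)) →
      Fm g γ w u k ≤ γ * gradient g u k + γ * w k ∧
      γ * gradient g u k + γ * w k < 0 ∧ u k < 0 := by
    intro k hk
    rcases hk with (h | h) | h
    · obtain ⟨h1, h2⟩ := h
      rw [Fm_gt h1 (hq k)]
      exact ⟨le_refl _, by linarith, h2⟩
    · obtain ⟨h1, h2, h3⟩ := h
      rw [Fm_mid (le_of_lt h1) (le_of_lt h2)]
      exact ⟨le_of_lt h2, h3, by linarith⟩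
    · obtain ⟨h1, h2⟩ := h
      have h1' : u k = γ * gradient g u k + γ * w k := h1
      rw [Fm_mid (by linarith [hq k]) (le_of_eq h1')] at h2 ⊢
      exact ⟨by linarith, by linarith, h2⟩
  -- key facts on the minus side: m ≤ F and 0 < m
  have keyM : ∀ k : Fin n,
      (k ∈ Amm g γ w u ∪ Izm g γ w u ∨ (k ∈ Imi g γ w u ∧ 0 < Fm g γ w u k)) →
      γ * gradient g u k - γ * w k ≤ Fm g γ w u k ∧
      0 < γ * gradient g u k - γ * w k ∧ 0 < u k := by
    intro k hk
    rcases hk with (h | h) | h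
    · obtain ⟨h1, h2⟩ := h
      rw [Fm_lt h2 (hq k)]
      exact ⟨le_refl _, by linarith, h1⟩
    · obtain ⟨h1, h2, h3⟩ := h
      rw [Fm_mid (le_of_lt h2) (le_of_lt h3)]
      exact ⟨le_of_lt h2, h1, by linarith⟩
    · obtain ⟨h1, h2⟩ := h
      have h1' : u k = γ * gradient g u k - γ * w k := h1
      rw [Fm_mid (le_of_eq h1'.symm) (by linarith [hq k])] at h2 ⊢
      exact ⟨by linarith, by linarith, h2⟩
  refine ⟨?_, ?_, ?_⟩
  · intro k hk
    obtain ⟨hF, hp, _⟩ := keyP k hk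
    obtain ⟨_, h2, _⟩ := hIp k (memP k hk)
    nlinarith
  · intro k hk
    obtain ⟨hF, hm, _⟩ := keyM k hk
    obtain ⟨_, h2, _⟩ := hIm k (memM k hk)
    nlinarith
  · intro k hk
    rcases hk with (((h | h) | h) | h) | h | h
    · obtain ⟨hu, _⟩ := hIp k (Or.inl (Or.inr h))
      have : u k < 0 := h.2
      nlinarith
    · obtain ⟨hu, _⟩ := hIm k (Or.inl (Or.inr h))
      have : 0 < u k := h.1
      nlinarith
    · obtain ⟨hu, _⟩ := hIp k (Or.inr h)
      obtain ⟨_, _, hneg⟩ := keyP k (Or.inl (Or.inr h))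
      nlinarith
    · obtain ⟨hu, _⟩ := hIm k (Or.inr h)
      obtain ⟨_, _, hpos⟩ := keyM k (Or.inl (Or.inr h))
      nlinarith
    · obtain ⟨hu, _⟩ := hIp k (Or.inl (Or.inl h.1))
      obtain ⟨_, _, hneg⟩ := keyP k (Or.inr h)
      nlinarith
    · obtain ⟨hu, _⟩ := hIm k (Or.inl (Or.inl h.1))
      obtain ⟨_, _, hpos⟩ := keyM k (Or.inr h)
      nlinarith
end
end

section
/- Let u ∈ ℝⁿ with Θ(u) > 0 and let d be the modified Newton direction at u. Then the one-sided directional derivative Θ'(u, d) = lim_{t→0⁺} (Θ(u + t·d) − Θ(u))/t exists and satisfies Θ'(u, d) ≤ −2Θ(u) < 0; in particular, d is a true descent direction for the merit functional Θ at u. -/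
open scoped RealInnerProductSpace
open Filter Topology

noncomputable section

variable {n : ℕ}

/-! ### Auxiliary lemmas for stmt8 -/

section Aux

lemma sign_soft_aux (b x : ℝ) (hb : 0 ≤ b) :
    Real.sign x * max (|x| - b) 0 = max (x - b) 0 + min (x + b) 0 := by
  rcases lt_trichotomy x 0 with h | h | h
  · rw [Real.sign_of_neg h, abs_of_neg h]
    have h1 : max (x - b) 0 = 0 := max_eq_right (by linarith)
    have h2 : min (x + b) 0 = -max (-(x + b)) (-0) := by
      rw [max_neg_neg]; ring_nf
    rw [h1, h2]
    have h3 : -(x + b) = -x - b := by ring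
    rw [h3, neg_zero]; ring
  · simp [h, max_eq_right, min_eq_right, hb]
  · rw [Real.sign_of_pos h, abs_of_pos h]
    have h2 : min (x + b) 0 = 0 := min_eq_right (by linarith)
    rw [h2]; ring

lemma Fm_apply_aux {n : ℕ} (g : Euc n → ℝ) (γ : ℝ) (w : Fin n → ℝ) (x : Euc n) (k : Fin n)
    (hb : 0 ≤ γ * w k) :
    Fm g γ w x k = x k - (max ((x k - γ * gradient g x k) - γ * w k) 0 +
      min ((x k - γ * gradient g x k) + γ * w k) 0) := by
  have h1 : Fm g γ w x k = x k - Real.sign ((x - γ • gradient g x) k) *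
      max (|(x - γ • gradient g x) k| - γ * w k) 0 := by
    simp [Fm, soft]
  have h2 : (x - γ • gradient g x) k = x k - γ * gradient g x k := rfl
  rw [h1, h2, sign_soft_aux _ _ hb]

lemma slope_tendsto_aux {φ : ℝ → ℝ} {s : ℝ} (hφ : HasDerivAt φ s 0) :
    Tendsto (fun t => (φ t - φ 0) / t) (𝓝[>] 0) (𝓝 s) := by
  have h := hasDerivAt_iff_tendsto_slope.mp hφ
  have h2 : Tendsto (slope φ 0) (𝓝[>] (0:ℝ)) (𝓝 s) :=
    h.mono_left (nhdsWithin_mono 0 (fun x hx => ne_of_gt hx))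
  refine h2.congr (fun t => ?_)
  simp [slope_def_field, div_eq_inv_mul]

lemma quotMax_gt {φ : ℝ → ℝ} {s b : ℝ} (hφ : HasDerivAt φ s 0) (hv : b < φ 0) :
    Tendsto (fun t => (max (φ t - b) 0 - max (φ 0 - b) 0) / t) (𝓝[>] 0) (𝓝 s) := by
  have hev : ∀ᶠ t in 𝓝[>] (0:ℝ), b < φ t :=
    eventually_nhdsWithin_of_eventually_nhds (hφ.continuousAt.eventually (eventually_gt_nhds hv))
  refine (slope_tendsto_aux hφ).congr' ?_
  filter_upwards [hev] with t ht
  rw [max_eq_left (by linarith), max_eq_left (by linarith)]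
  ring_nf

lemma quotMax_lt {φ : ℝ → ℝ} {s b : ℝ} (hφ : HasDerivAt φ s 0) (hv : φ 0 < b) :
    Tendsto (fun t => (max (φ t - b) 0 - max (φ 0 - b) 0) / t) (𝓝[>] 0) (𝓝 0) := by
  have hev : ∀ᶠ t in 𝓝[>] (0:ℝ), φ t < b :=
    eventually_nhdsWithin_of_eventually_nhds (hφ.continuousAt.eventually (eventually_lt_nhds hv))
  refine (tendsto_const_nhds).congr' ?_
  filter_upwards [hev] with t ht
  rw [max_eq_right (by linarith), max_eq_right (by linarith)]
  simp

lemma quotMax_eq {φ : ℝ → ℝ} {s b : ℝ} (hφ : HasDerivAt φ s 0) (hv : φ 0 = b) :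
    Tendsto (fun t => (max (φ t - b) 0 - max (φ 0 - b) 0) / t) (𝓝[>] 0) (𝓝 (max s 0)) := by
  have h : Tendsto (fun t => max ((φ t - φ 0)/t) 0) (𝓝[>] (0:ℝ)) (𝓝 (max s 0)) :=
    (slope_tendsto_aux hφ).max tendsto_const_nhds
  refine h.congr' ?_
  filter_upwards [self_mem_nhdsWithin] with t (ht : 0 < t)
  rw [show φ 0 = b from hv]
  rw [sub_self, max_self, sub_zero, ← max_div_div_right (le_of_lt ht) (φ t - b) 0, zero_div]

lemma quotMin_lt {φ : ℝ → ℝ} {s b : ℝ} (hφ : HasDerivAt φ s 0) (hv : φ 0 < -b) :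
    Tendsto (fun t => (min (φ t + b) 0 - min (φ 0 + b) 0) / t) (𝓝[>] 0) (𝓝 s) := by
  have hev : ∀ᶠ t in 𝓝[>] (0:ℝ), φ t < -b :=
    eventually_nhdsWithin_of_eventually_nhds (hφ.continuousAt.eventually (eventually_lt_nhds hv))
  refine (slope_tendsto_aux hφ).congr' ?_
  filter_upwards [hev] with t ht
  rw [min_eq_left (by linarith), min_eq_left (by linarith)]
  ring_nf

lemma quotMin_gt {φ : ℝ → ℝ} {s b : ℝ} (hφ : HasDerivAt φ s 0) (hv : -b < φ 0) :
    Tendsto (fun t => (min (φ t + b) 0 - min (φ 0 + b) 0) / t) (𝓝[>] 0) (𝓝 0) := by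
  have hev : ∀ᶠ t in 𝓝[>] (0:ℝ), -b < φ t :=
    eventually_nhdsWithin_of_eventually_nhds (hφ.continuousAt.eventually (eventually_gt_nhds hv))
  refine (tendsto_const_nhds).congr' ?_
  filter_upwards [hev] with t ht
  rw [min_eq_right (by linarith), min_eq_right (by linarith)]
  simp

lemma quotMin_eq {φ : ℝ → ℝ} {s b : ℝ} (hφ : HasDerivAt φ s 0) (hv : φ 0 = -b) :
    Tendsto (fun t => (min (φ t + b) 0 - min (φ 0 + b) 0) / t) (𝓝[>] 0) (𝓝 (min s 0)) := by
  have h : Tendsto (fun t => min ((φ t - φ 0)/t) 0) (𝓝[>] (0:ℝ)) (𝓝 (min s 0)) :=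
    (slope_tendsto_aux hφ).min tendsto_const_nhds
  refine h.congr' ?_
  filter_upwards [self_mem_nhdsWithin] with t (ht : 0 < t)
  rw [show φ 0 = -b from hv]
  rw [show -b + b = (0:ℝ) by ring, min_self, sub_zero,
    ← min_div_div_right (le_of_lt ht) (φ t + b) 0, zero_div]
  congr 1
  ring

lemma grad_coord_hasDerivAt {n : ℕ} (g : Euc n → ℝ) (hg : ContDiff ℝ 2 g) (u d : Euc n)
    (k : Fin n) :
    HasDerivAt (fun t : ℝ => gradient g (u + t • d) k) (hess g u d k) 0 := by
  have hdiff : Differentiable ℝ (gradient g) := by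
    have h1 : ContDiff ℝ 1 (fderiv ℝ g) := hg.fderiv_right (by norm_num)
    have heq : gradient g = fun x => (InnerProductSpace.toDual ℝ (Euc n)).symm (fderiv ℝ g x) :=
      rfl
    rw [heq]
    exact (InnerProductSpace.toDual ℝ (Euc n)).symm.toContinuousLinearEquiv.differentiable.comp
      (h1.differentiable one_ne_zero)
  have hc : HasDerivAt (fun t : ℝ => u + t • d) d 0 := by
    simpa using ((hasDerivAt_id (0:ℝ)).smul_const d).const_add u
  have hF : HasFDerivAt (gradient g) (fderiv ℝ (gradient g) u) ((fun t : ℝ => u + t • d) 0) := by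
    simpa using (hdiff u).hasFDerivAt
  have h2 : HasDerivAt (fun t : ℝ => gradient g (u + t • d)) (fderiv ℝ (gradient g) u d) 0 :=
    hF.comp_hasDerivAt_of_eq 0 hc rfl
  exact (EuclideanSpace.proj k).hasFDerivAt.comp_hasDerivAt 0 h2

/-- Per-coordinate descent: existence of the one-sided derivative of `F_k` along `d`
with the key bound. -/
lemma perk {n : ℕ} (c₁ c₂ : ℝ) (g : Euc n → ℝ) (hg : Assump n g c₁ c₂)
    (w : Fin n → ℝ) (hw : ∀ k, 0 < w k) (γ : ℝ) (hγ : 0 < γ)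
    (u d : Euc n) (hd : IsModDir g γ w u d) (k : Fin n) :
    ∃ δ : ℝ,
      Tendsto (fun t : ℝ => (Fm g γ w (u + t • d) k - Fm g γ w u k) / t) (𝓝[>] 0) (𝓝 δ) ∧
      Fm g γ w u k * δ ≤ -(Fm g γ w u k)^2 := by
  have hb : 0 < γ * w k := mul_pos hγ (hw k)
  set A := γ * gradient g u k with hA
  set B := γ * w k with hB
  set M := γ * hess g u d k with hM
  set φ : ℝ → ℝ := fun t => (u k + t * d k) - γ * gradient g (u + t • d) k with hφdef
  have hcoord : ∀ t : ℝ, (u + t • d) k = u k + t * d k := fun t => rfl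
  have hφ0 : φ 0 = u k - A := by
    simp only [hφdef, hA]
    norm_num
  have hφ : HasDerivAt φ (d k - γ * hess g u d k) 0 := by
    have h1 : HasDerivAt (fun t : ℝ => u k + t * d k) (d k) 0 := by
      simpa using ((hasDerivAt_id (0:ℝ)).mul_const (d k)).const_add (u k)
    exact h1.sub ((grad_coord_hasDerivAt g hg.contDiff u d k).const_mul γ)
  set s : ℝ := d k - M with hs
  have hφ' : HasDerivAt φ s 0 := by rw [hs, hM]; exact hφ
  have hFt : ∀ t : ℝ, Fm g γ w (u + t • d) k
      = (u k + t * d k) - (max (φ t - B) 0 + min (φ t + B) 0) := by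
    intro t
    rw [Fm_apply_aux g γ w _ k (le_of_lt hb), hcoord t]
  have hF0 : Fm g γ w u k = (u k + 0 * d k) - (max (φ 0 - B) 0 + min (φ 0 + B) 0) := by
    have := hFt 0
    simpa using this
  -- general limit combiner
  have key : ∀ δmax δmin : ℝ,
      Tendsto (fun t => (max (φ t - B) 0 - max (φ 0 - B) 0) / t) (𝓝[>] 0) (𝓝 δmax) →
      Tendsto (fun t => (min (φ t + B) 0 - min (φ 0 + B) 0) / t) (𝓝[>] 0) (𝓝 δmin) →
      Tendsto (fun t : ℝ => (Fm g γ w (u + t • d) k - Fm g γ w u k) / t) (𝓝[>] 0)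
        (𝓝 (d k - δmax - δmin)) := by
    intro δmax δmin hmax hmin
    have h := (tendsto_const_nhds (x := d k) (f := 𝓝[>] (0:ℝ))).sub hmax |>.sub hmin
    refine h.congr' ?_
    filter_upwards [self_mem_nhdsWithin] with t (ht : 0 < t)
    rw [hFt t, hF0]
    field_simp
    ring
  have hv0 : φ 0 = u k - A := hφ0
  clear_value A B M s φ
  rcases lt_trichotomy (u k) (A - B) with hc1 | hc1 | hc1
  · -- Case A⁻ : u k < A - B, i.e. φ 0 < -B
    have hvlt : φ 0 < -B := by rw [hv0]; linarith
    have hvltB : φ 0 < B := by linarith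
    refine ⟨d k - 0 - s, key 0 s (quotMax_lt hφ' hvltB) (quotMin_lt hφ' hvlt), ?_⟩
    have hFval : Fm g γ w u k = A - B := by
      rw [hF0, max_eq_right (by linarith), min_eq_left (by rw [hv0]; linarith)]
      rw [hv0]; ring
    have hδ : d k - 0 - s = M := by rw [hs]; ring
    rw [hFval, hδ]
    rcases lt_or_ge 0 (u k) with hu | hu
    · -- k ∈ Amm ⊆ ImiBar
      have hmem : k ∈ ImiBar g γ w u := by
        simp only [ImiBar, Amm, Set.mem_union, Set.mem_setOf_eq]
        exact Or.inl (Or.inr ⟨hu, by rw [← hA, ← hB]; linarith⟩)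
      have hcond := (hd.2.2.2 k hmem).2.1
      rw [hFval] at hcond
      rw [← hM] at hcond
      have h2 : (A - B) * (M + (A - B)) ≤ 0 :=
        mul_nonpos_iff.mpr (Or.inl ⟨by linarith, by linarith⟩)
      nlinarith [h2]
    · -- k ∈ AmBar ⊆ ABar
      have hmem : k ∈ ABar g γ w u := by
        simp only [ABar, AmBar, Am, Amm, Set.mem_union, Set.mem_diff, Set.mem_setOf_eq]
        refine Or.inr ⟨by rw [← hA, ← hB]; linarith, ?_⟩
        intro hcon
        exact absurd hcon.1 (not_lt.2 hu)
      have hcond := hd.1 k hmem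
      rw [hFval, ← hM] at hcond
      rw [hcond]
      exact le_of_eq (by ring)
  · -- Case I⁻ : u k = A - B, i.e. φ 0 = -B
    have hveq : φ 0 = -B := by rw [hv0]; linarith
    have hvltB : φ 0 < B := by rw [hveq]; linarith
    refine ⟨d k - 0 - min s 0, key 0 (min s 0) (quotMax_lt hφ' hvltB) (quotMin_eq hφ' hveq), ?_⟩
    have hFval : Fm g γ w u k = u k := by
      rw [hF0, max_eq_right (by rw [hveq]; linarith), hveq]
      norm_num
    have hmem : k ∈ ImiBar g γ w u := by
      simp only [ImiBar, Imi, Set.mem_union, Set.mem_setOf_eq]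
      exact Or.inl (Or.inl (by rw [← hA, ← hB]; linarith))
    have hcond := hd.2.2.2 k hmem
    rw [hFval, ← hM] at hcond
    obtain ⟨hc2, hc3, hc4⟩ := hcond
    have hδu : d k - 0 - min s 0 + u k = 0 := by
      rcases mul_eq_zero.mp hc4 with h0 | h0
      · rcases le_total s 0 with hss | hss
        · rw [min_eq_left hss]; linarith
        · rw [min_eq_right hss]; linarith
      · rcases le_total s 0 with hss | hss
        · rw [min_eq_left hss]; linarith
        · rw [min_eq_right hss]; linarith
    have hδ' : d k - 0 - min s 0 = -u k := by linarith
    rw [hFval, hδ']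
    exact le_of_eq (by ring)
  · rcases lt_trichotomy (u k) (A + B) with hc2 | hc2 | hc2
    · -- Case I° : A - B < u k < A + B
      have hvgt : -B < φ 0 := by rw [hv0]; linarith
      have hvlt : φ 0 < B := by rw [hv0]; linarith
      refine ⟨d k - 0 - 0, key 0 0 (quotMax_lt hφ' hvlt) (quotMin_gt hφ' hvgt), ?_⟩
      have hFval : Fm g γ w u k = u k := by
        rw [hF0, max_eq_right (by linarith), min_eq_right (by linarith)]
        norm_num
      rw [hFval]
      rcases lt_or_ge (A + B) 0 with hab | hab
      · -- k ∈ Izp ⊆ IplBar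
        have hmem : k ∈ IplBar g γ w u := by
          simp only [IplBar, Izp, Set.mem_union, Set.mem_setOf_eq]
          exact Or.inr ⟨by rw [← hA, ← hB]; linarith, by rw [← hA, ← hB]; linarith,
            by rw [← hA, ← hB]; linarith⟩
        have hcond := (hd.2.2.1 k hmem).1
        have h2 : u k * (d k + u k) ≤ 0 :=
          mul_nonpos_iff.mpr (Or.inr ⟨by linarith, hcond⟩)
        nlinarith [h2]
      · rcases lt_or_ge 0 (A - B) with hab2 | hab2
        · -- k ∈ Izm ⊆ ImiBar
          have hmem : k ∈ ImiBar g γ w u := by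
            simp only [ImiBar, Izm, Set.mem_union, Set.mem_setOf_eq]
            exact Or.inr ⟨by rw [← hA, ← hB]; linarith, by rw [← hA, ← hB]; linarith,
              by rw [← hA, ← hB]; linarith⟩
          have hcond := (hd.2.2.2 k hmem).1
          have h2 : u k * (d k + u k) ≤ 0 :=
            mul_nonpos_iff.mpr (Or.inl ⟨by linarith, hcond⟩)
          nlinarith [h2]
        · -- k ∈ IzBar
          have hmem : k ∈ IzBar g γ w u := by
            simp only [IzBar, Iz, Izp, Izm, Set.mem_diff, Set.mem_union, Set.mem_setOf_eq]
            refine ⟨⟨by rw [← hA, ← hB]; linarith, by rw [← hA, ← hB]; linarith⟩, ?_⟩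
            rintro (hcon | hcon)
            · have := hcon.2.2; rw [← hA, ← hB] at this; linarith
            · have := hcon.1; rw [← hA, ← hB] at this; linarith
          have hcond := hd.2.1 k hmem
          rw [hcond]
          exact le_of_eq (by ring)
    · -- Case I⁺ : u k = A + B, i.e. φ 0 = B
      have hveq : φ 0 = B := by rw [hv0]; linarith
      have hvgt : -B < φ 0 := by rw [hveq]; linarith
      refine ⟨d k - max s 0 - 0, key (max s 0) 0 (quotMax_eq hφ' hveq) (quotMin_gt hφ' hvgt), ?_⟩
      have hFval : Fm g γ w u k = u k := by
        rw [hF0, hveq]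
        rw [sub_self, max_self, min_eq_right (by linarith)]
        norm_num
      have hmem : k ∈ IplBar g γ w u := by
        simp only [IplBar, Ipl, Set.mem_union, Set.mem_setOf_eq]
        exact Or.inl (Or.inl (by rw [← hA, ← hB]; linarith))
      have hcond := hd.2.2.1 k hmem
      rw [hFval, ← hM] at hcond
      obtain ⟨hc3, hc4, hc5⟩ := hcond
      have hδu : d k - max s 0 - 0 + u k = 0 := by
        rcases mul_eq_zero.mp hc5 with h0 | h0
        · rcases le_total s 0 with hss | hss
          · rw [max_eq_right hss]; linarith
          · rw [max_eq_left hss]; linarith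
        · rcases le_total s 0 with hss | hss
          · rw [max_eq_right hss]; linarith
          · rw [max_eq_left hss]; linarith
      have hδ' : d k - max s 0 - 0 = -u k := by linarith
      rw [hFval, hδ']
      exact le_of_eq (by ring)
    · -- Case A⁺ : u k > A + B, i.e. φ 0 > B
      have hvgt : B < φ 0 := by rw [hv0]; linarith
      have hvgt2 : -B < φ 0 := by linarith
      refine ⟨d k - s - 0, key s 0 (quotMax_gt hφ' hvgt) (quotMin_gt hφ' hvgt2), ?_⟩
      have hFval : Fm g γ w u k = A + B := by
        rw [hF0, max_eq_left (by linarith), min_eq_right (by linarith), hv0]; ring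
      have hδ : d k - s - 0 = M := by rw [hs]; ring
      rw [hFval, hδ]
      rcases lt_or_ge (u k) 0 with hu | hu
      · -- k ∈ App ⊆ IplBar
        have hmem : k ∈ IplBar g γ w u := by
          simp only [IplBar, App, Set.mem_union, Set.mem_setOf_eq]
          exact Or.inl (Or.inr ⟨by rw [← hA, ← hB]; linarith, hu⟩)
        have hcond := (hd.2.2.1 k hmem).2.1
        rw [hFval, ← hM] at hcond
        have h2 : (A + B) * (M + (A + B)) ≤ 0 :=
          mul_nonpos_iff.mpr (Or.inr ⟨by linarith, hcond⟩)
        nlinarith [h2]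
      · -- k ∈ ApBar ⊆ ABar
        have hmem : k ∈ ABar g γ w u := by
          simp only [ABar, ApBar, Ap, App, Set.mem_union, Set.mem_diff, Set.mem_setOf_eq]
          refine Or.inl ⟨by rw [← hA, ← hB]; linarith, ?_⟩
          intro hcon
          exact absurd hcon.2 (not_lt.2 hu)
        have hcond := hd.1 k hmem
        rw [hFval, ← hM] at hcond
        rw [hcond]
        exact le_of_eq (by ring)

lemma Th_eq_sum {n : ℕ} (g : Euc n → ℝ) (γ : ℝ) (w : Fin n → ℝ) (x : Euc n) :
    Th g γ w x = ∑ k : Fin n, (Fm g γ w x k)^2 := by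
  rw [Th, EuclideanSpace.norm_eq, Real.sq_sqrt (by positivity)]
  simp [Real.norm_eq_abs, sq_abs]

end Aux

/-- descent property of the modified Newton direction w.r.t. `Θ`. -/
theorem stmt8 {n : ℕ} (hn : 1 ≤ n) (c₁ c₂ : ℝ) (g : Euc n → ℝ) (hg : Assump n g c₁ c₂)
    (w : Fin n → ℝ) (hw : ∀ k, 0 < w k) (γ : ℝ) (hγ : 0 < γ)
    (u d : Euc n) (hpos : 0 < Th g γ w u) (hd : IsModDir g γ w u d) :
    ∃ DTh : ℝ,
      Tendsto (fun t : ℝ => (Th g γ w (u + t • d) - Th g γ w u) / t) (𝓝[>] 0) (𝓝 DTh) ∧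
      DTh ≤ -2 * Th g γ w u ∧ DTh < 0 := by
  have hq := fun k => perk c₁ c₂ g hg w hw γ hγ u d hd k
  choose δ hδlim hδbd using hq
  have ht0 : Tendsto (fun t : ℝ => t) (𝓝[>] (0:ℝ)) (𝓝 0) :=
    (tendsto_id (x := 𝓝 (0:ℝ))).mono_left nhdsWithin_le_nhds
  have hsq : ∀ k : Fin n,
      Tendsto (fun t : ℝ => ((Fm g γ w (u + t • d) k)^2 - (Fm g γ w u k)^2) / t)
        (𝓝[>] 0) (𝓝 (2 * Fm g γ w u k * δ k)) := by
    intro k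
    have hFt : Tendsto (fun t : ℝ => Fm g γ w (u + t • d) k) (𝓝[>] 0)
        (𝓝 (Fm g γ w u k)) := by
      have h1 : Tendsto
          (fun t : ℝ => Fm g γ w u k + t * ((Fm g γ w (u + t • d) k - Fm g γ w u k) / t))
          (𝓝[>] 0) (𝓝 (Fm g γ w u k + 0 * δ k)) :=
        tendsto_const_nhds.add (ht0.mul (hδlim k))
      rw [zero_mul, add_zero] at h1
      refine h1.congr' ?_
      filter_upwards [self_mem_nhdsWithin] with t (ht : 0 < t)
      rw [mul_div_cancel₀ _ (ne_of_gt ht)]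
      ring
    have h2 : Tendsto
        (fun t : ℝ => (Fm g γ w (u + t • d) k + Fm g γ w u k) *
          ((Fm g γ w (u + t • d) k - Fm g γ w u k) / t))
        (𝓝[>] 0) (𝓝 ((Fm g γ w u k + Fm g γ w u k) * δ k)) :=
      (hFt.add tendsto_const_nhds).mul (hδlim k)
    have h3 : (Fm g γ w u k + Fm g γ w u k) * δ k = 2 * Fm g γ w u k * δ k := by ring
    rw [h3] at h2
    refine h2.congr' ?_
    filter_upwards [self_mem_nhdsWithin] with t (ht : 0 < t)
    field_simp
    ring
  have hsum : Tendsto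
      (fun t : ℝ => ∑ k : Fin n, ((Fm g γ w (u + t • d) k)^2 - (Fm g γ w u k)^2) / t)
      (𝓝[>] 0) (𝓝 (∑ k : Fin n, 2 * Fm g γ w u k * δ k)) :=
    tendsto_finset_sum _ (fun k _ => hsq k)
  refine ⟨∑ k : Fin n, 2 * Fm g γ w u k * δ k, ?_, ?_, ?_⟩
  · refine hsum.congr (fun t => ?_)
    rw [Th_eq_sum, Th_eq_sum, ← Finset.sum_sub_distrib, Finset.sum_div]
  · have hle : ∑ k : Fin n, 2 * Fm g γ w u k * δ k ≤ ∑ k : Fin n, -2 * (Fm g γ w u k)^2 :=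
      Finset.sum_le_sum (fun k _ => by have := hδbd k; nlinarith)
    have heq : ∑ k : Fin n, -2 * (Fm g γ w u k)^2 = -2 * Th g γ w u := by
      rw [Th_eq_sum, Finset.mul_sum]
    linarith
  · have hle : ∑ k : Fin n, 2 * Fm g γ w u k * δ k ≤ ∑ k : Fin n, -2 * (Fm g γ w u k)^2 :=
      Finset.sum_le_sum (fun k _ => by have := hδbd k; nlinarith)
    have heq : ∑ k : Fin n, -2 * (Fm g γ w u k)^2 = -2 * Th g γ w u := by
      rw [Th_eq_sum, Finset.mul_sum]
    linarith
end
end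

section
/- Let β ∈ (0,1) and σ ∈ (0,1/2). Let u ∈ ℝⁿ with Θ(u) > 0 and let d be the modified Newton direction at u. Then there exists a finite index l ∈ ℕ such that the Armijo inequality Θ(u + βˡ·d) ≤ (1 − 2σβˡ)·Θ(u) holds. -/
open scoped RealInnerProductSpace
open Filter Topology

noncomputable section

variable {n : ℕ}

section ArmijoHelpers

/-! ### Auxiliary lemmas for `stmt9` -/

private lemma comp_le_norm' (x : Euc n) (k : Fin n) : |x k| ≤ ‖x‖ := by
  rw [EuclideanSpace.norm_eq]
  have h1 : |x k| = Real.sqrt (‖x k‖ ^ 2) := by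
    rw [Real.sqrt_sq_eq_abs, abs_norm, Real.norm_eq_abs]
  rw [h1]
  apply Real.sqrt_le_sqrt
  exact Finset.single_le_sum (f := fun i => ‖x i‖ ^ 2) (fun i _ => by positivity)
    (Finset.mem_univ k)

private lemma Fm_clamp (g : Euc n → ℝ) {γ : ℝ} {w : Fin n → ℝ} (x : Euc n) (k : Fin n)
    (hc : 0 < γ * w k) :
    Fm g γ w x k = max (min (x k) (γ * gradient g x k + γ * w k))
      (γ * gradient g x k - γ * w k) := by
  have hsub : Fm g γ w x k = x k - soft γ w (x - γ • gradient g x) k := by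
    simp [Fm]
  set v := x k - γ * gradient g x k with hv
  have hvk : (x - γ • gradient g x) k = v := by
    simp [hv, PiLp.sub_apply, PiLp.smul_apply, smul_eq_mul]
  rw [hsub]
  show x k - Real.sign ((x - γ • gradient g x) k) * max (|(x - γ • gradient g x) k| - γ * w k) 0
      = _
  rw [hvk]
  set c := γ * w k
  rcases lt_trichotomy v 0 with h | h | h
  · rw [Real.sign_of_neg h, abs_of_neg h]
    rcases le_or_gt (-v) c with h2 | h2
    · rw [max_eq_right (by linarith), min_eq_left (by simp only [hv]; linarith),
        max_eq_left (by simp only [hv]; linarith)]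
      ring
    · rw [max_eq_left (by linarith), min_eq_left (by simp only [hv]; linarith),
        max_eq_right (by simp only [hv]; linarith)]
      simp only [hv]; ring
  · rw [h]
    simp only [Real.sign_zero, zero_mul, sub_zero]
    have hxk : x k = γ * gradient g x k := by simp only [hv] at h; linarith
    rw [min_eq_left (by linarith), max_eq_left (by linarith)]
  · rw [Real.sign_of_pos h, abs_of_pos h]
    rcases le_or_gt v c with h2 | h2
    · rw [max_eq_right (by linarith), min_eq_left (by simp only [hv]; linarith),
        max_eq_left (by simp only [hv]; linarith)]
      ring
    · rw [max_eq_left (by linarith), min_eq_right (by simp only [hv]; linarith),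
        max_eq_left (by simp only [hv]; linarith)]
      simp only [hv]; ring

private lemma caseAplus {p q c dk m r t : ℝ} (hc : 0 < c) (hm : m = -(q + c))
    (ht1 : t ≤ 1)
    (hbig : q + t * m + r + c < p + t * dk) :
    |max (min (p + t * dk) (q + t * m + r + c)) (q + t * m + r - c)|
      ≤ (1 - t) * |q + c| + |r| := by
  rw [min_eq_right hbig.le, max_eq_left (by linarith)]
  have h1 : q + t * m + r + c = (1 - t) * (q + c) + r := by rw [hm]; ring
  rw [h1]
  calc |(1 - t) * (q + c) + r| ≤ |(1 - t) * (q + c)| + |r| := abs_add_le _ _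
    _ = (1 - t) * |q + c| + |r| := by rw [abs_mul, abs_of_nonneg (by linarith)]

private lemma caseAminus {p q c dk m r t : ℝ} (hc : 0 < c) (hm : m = -(q - c))
    (ht1 : t ≤ 1)
    (hsm : p + t * dk < q + t * m + r - c) :
    |max (min (p + t * dk) (q + t * m + r + c)) (q + t * m + r - c)|
      ≤ (1 - t) * |q - c| + |r| := by
  rw [min_eq_left (by linarith), max_eq_right hsm.le]
  have h1 : q + t * m + r - c = (1 - t) * (q - c) + r := by rw [hm]; ring
  rw [h1]
  calc |(1 - t) * (q - c) + r| ≤ |(1 - t) * (q - c)| + |r| := abs_add_le _ _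
    _ = (1 - t) * |q - c| + |r| := by rw [abs_mul, abs_of_nonneg (by linarith)]

private lemma caseIz {p q c dk m r t : ℝ} (hd : dk = -p) (ht1 : t ≤ 1)
    (h1 : q + t * m + r - c < p + t * dk) (h2 : p + t * dk < q + t * m + r + c)
    (hF1 : q - c < p) (hF2 : p < q + c) :
    |max (min (p + t * dk) (q + t * m + r + c)) (q + t * m + r - c)|
      ≤ (1 - t) * |max (min p (q + c)) (q - c)| + |r| := by
  rw [min_eq_left h2.le, max_eq_left h1.le, min_eq_left hF2.le, max_eq_left hF1.le]
  have : p + t * dk = (1 - t) * p := by rw [hd]; ring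
  rw [this, abs_mul, abs_of_nonneg (by linarith : (0:ℝ) ≤ 1 - t)]
  have := abs_nonneg r
  linarith

private lemma caseIpl {p q c dk m r t : ℝ} (hc : 0 < c) (hlo : q - c < p)
    (hd : 0 ≤ dk + p) (hm : 0 ≤ m + min p (q + c))
    (hcompl : (dk + p) * (m + min p (q + c)) = 0)
    (hsign : p ≤ 0 ∨ min p (q + c) = p) (hsign2 : min p (q + c) = q + c ∨ q + c ≤ 0)
    (ht0 : 0 < t) (ht : t ≤ 1 / 2)
    (hclamp : q + t * m + r - c < p + t * dk) :
    |max (min (p + t * dk) (q + t * m + r + c)) (q + t * m + r - c)|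
      ≤ (1 - t) * |min p (q + c)| + |r| := by
  set F := min p (q + c) with hF
  have hFp : F ≤ p := min_le_left _ _
  have hFq : F ≤ q + c := min_le_right _ _
  have habsF := le_abs_self F
  have hnabsF := neg_abs_le F
  have habsr := le_abs_self r
  have hnabsr := neg_abs_le r
  have h1t : (0:ℝ) ≤ 1 - t := by linarith
  have hmul : (1 - t) * F ≤ (1 - t) * |F| := mul_le_mul_of_nonneg_left habsF h1t
  have hstep : max (min (p + t * dk) (q + t * m + r + c)) (q + t * m + r - c)
      = min (p + t * dk) (q + t * m + r + c) :=
    max_eq_left (le_min hclamp.le (by linarith))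
  rw [hstep, abs_le]
  constructor
  · rw [le_min_iff]
    have h1 : (1 - t) * F ≤ p + t * dk := by nlinarith
    have h2 : (1 - t) * F - |r| ≤ q + t * m + r + c := by nlinarith
    constructor
    · nlinarith
    · nlinarith
  · rcases mul_eq_zero.mp hcompl with h0 | h0
    · have hub : min (p + t * dk) (q + t * m + r + c) ≤ (1 - t) * p := by
        calc min (p + t * dk) (q + t * m + r + c) ≤ p + t * dk := min_le_left _ _
          _ = (1 - t) * p := by rw [show dk = -p by linarith]; ring
      rcases hsign with hs | hs
      · have : (1 - t) * p ≤ 0 := mul_nonpos_of_nonneg_of_nonpos h1t hs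
        nlinarith [abs_nonneg F, abs_nonneg r]
      · rw [hs] at hmul; nlinarith
    · have hub : min (p + t * dk) (q + t * m + r + c) ≤ q + c - t * F + r := by
        calc min (p + t * dk) (q + t * m + r + c) ≤ q + t * m + r + c := min_le_right _ _
          _ = q + c - t * F + r := by rw [show m = -F by linarith]; ring
      rcases hsign2 with hs | hs
      · nlinarith
      · have hmul2 : t * |F| ≤ (1 - t) * |F| :=
          mul_le_mul_of_nonneg_right (by linarith) (abs_nonneg F)
        have hmul3 : t * (-|F|) ≤ t * F := mul_le_mul_of_nonneg_left hnabsF ht0.le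
        nlinarith

private lemma caseImi {p q c dk m r t : ℝ} (hc : 0 < c) (hhi : p < q + c)
    (hd : dk + p ≤ 0) (hm : m + max p (q - c) ≤ 0)
    (hcompl : (dk + p) * (m + max p (q - c)) = 0)
    (hsign : 0 ≤ p ∨ max p (q - c) = p) (hsign2 : max p (q - c) = q - c ∨ 0 ≤ q - c)
    (ht0 : 0 < t) (ht : t ≤ 1 / 2)
    (hclamp : p + t * dk < q + t * m + r + c) :
    |max (min (p + t * dk) (q + t * m + r + c)) (q + t * m + r - c)|
      ≤ (1 - t) * |max p (q - c)| + |r| := by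
  set F := max p (q - c) with hF
  have hFp : p ≤ F := le_max_left _ _
  have hFq : q - c ≤ F := le_max_right _ _
  have habsF := le_abs_self F
  have hnabsF := neg_abs_le F
  have habsr := le_abs_self r
  have hnabsr := neg_abs_le r
  have h1t : (0:ℝ) ≤ 1 - t := by linarith
  have hmul : (1 - t) * (-|F|) ≤ (1 - t) * F := mul_le_mul_of_nonneg_left hnabsF h1t
  have hstep : max (min (p + t * dk) (q + t * m + r + c)) (q + t * m + r - c)
      = max (p + t * dk) (q + t * m + r - c) := by
    rw [min_eq_left hclamp.le]
  rw [hstep, abs_le]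
  constructor
  · rcases mul_eq_zero.mp hcompl with h0 | h0
    · have hub : (1 - t) * p ≤ max (p + t * dk) (q + t * m + r - c) := by
        calc (1 - t) * p = p + t * dk := by rw [show dk = -p by linarith]; ring
          _ ≤ _ := le_max_left _ _
      rcases hsign with hs | hs
      · have : 0 ≤ (1 - t) * p := mul_nonneg h1t hs
        nlinarith [abs_nonneg F, abs_nonneg r]
      · rw [hs] at hmul; nlinarith
    · have hub : q - c - t * F + r ≤ max (p + t * dk) (q + t * m + r - c) := by
        calc q - c - t * F + r = q + t * m + r - c := by rw [show m = -F by linarith]; ring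
          _ ≤ _ := le_max_right _ _
      rcases hsign2 with hs | hs
      · nlinarith
      · have hmul2 : -((1 - t) * |F|) ≤ -(t * |F|) := by
          have : t * |F| ≤ (1 - t) * |F| :=
            mul_le_mul_of_nonneg_right (by linarith) (abs_nonneg F)
          linarith
        have hmul3 : t * F ≤ t * |F| := mul_le_mul_of_nonneg_left habsF ht0.le
        nlinarith
  · rw [max_le_iff]
    have h1 : p + t * dk ≤ (1 - t) * F := by nlinarith
    have h2 : q + t * m + r - c ≤ (1 - t) * F + |r| := by nlinarith
    constructor
    · nlinarith
    · nlinarith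

private lemma grad_contDiff' (g : Euc n → ℝ) (hg : ContDiff ℝ 2 g) :
    ContDiff ℝ 1 (gradient g) := by
  have h1 : ContDiff ℝ 1 (fderiv ℝ g) := hg.fderiv_right (by norm_num)
  have h2 : gradient g = fun x => (InnerProductSpace.toDual ℝ (Euc n)).symm (fderiv ℝ g x) := rfl
  rw [h2]
  exact ((InnerProductSpace.toDual ℝ (Euc n)).symm.contDiff).comp h1

private lemma grad_line_deriv' (g : Euc n → ℝ) (hg : ContDiff ℝ 2 g) (u d : Euc n) :
    HasDerivAt (fun t : ℝ => gradient g (u + t • d)) (fderiv ℝ (gradient g) u d) 0 := by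
  have hdg : DifferentiableAt ℝ (gradient g) u :=
    ((grad_contDiff' g hg).differentiable one_ne_zero) u
  have hline : HasDerivAt (fun t : ℝ => u + t • d) d 0 := by
    simpa using ((hasDerivAt_id (0 : ℝ)).smul_const d).const_add u
  have hdg' : HasFDerivAt (gradient g) (fderiv ℝ (gradient g) u) (u + (0:ℝ) • d) := by
    simpa using hdg.hasFDerivAt
  exact hdg'.comp_hasDerivAt 0 hline

private lemma Th_sum (g : Euc n → ℝ) (γ : ℝ) (w : Fin n → ℝ) (x : Euc n) :
    Th g γ w x = ∑ k, (Fm g γ w x k) ^ 2 := by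
  rw [Th, EuclideanSpace.norm_eq, Real.sq_sqrt (by positivity)]
  congr 1; funext k; rw [Real.norm_eq_abs, sq_abs]

end ArmijoHelpers

section KeyLemma
set_option maxHeartbeats 1000000

variable {g : Euc n → ℝ} {γ : ℝ} {w : Fin n → ℝ} {u d : Euc n}

private lemma key_component (hγ : 0 < γ) (hw : ∀ k, 0 < w k) (hg2 : ContDiff ℝ 2 g)
    (hd : IsModDir g γ w u d) (k : Fin n) :
    ∀ᶠ t in 𝓝[>] (0:ℝ),
      |Fm g γ w (u + t • d) k| ≤ (1 - t) * |Fm g γ w u k|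
        + |γ * gradient g (u + t • d) k - γ * gradient g u k - t * (γ * hess g u d k)| := by
  have hc : 0 < γ * w k := mul_pos hγ (hw k)
  have hFt : ∀ t : ℝ, Fm g γ w (u + t • d) k
      = max (min (u k + t * d k) (γ * gradient g (u + t • d) k + γ * w k))
          (γ * gradient g (u + t • d) k - γ * w k) := by
    intro t
    have hpt : (u + t • d) k = u k + t * d k := by
      simp [PiLp.add_apply, PiLp.smul_apply]
    rw [Fm_clamp g _ k hc, hpt]
  have hFu := Fm_clamp g u k hc
  have hgc : Continuous fun t : ℝ => γ * gradient g (u + t • d) k := by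
    apply continuous_const.mul
    exact (continuous_apply k).comp ((PiLp.continuous_ofLp 2 _).comp
      ((grad_contDiff' g hg2).continuous.comp (by continuity)))
  have hT : Tendsto (fun t : ℝ => γ * gradient g (u + t • d) k) (𝓝[>] 0)
      (𝓝 (γ * gradient g u k)) := by
    have := hgc.tendsto 0
    simp only [zero_smul, add_zero] at this
    exact this.mono_left nhdsWithin_le_nhds
  have hP : Tendsto (fun t : ℝ => u k + t * d k) (𝓝[>] 0) (𝓝 (u k)) := by
    have : Continuous fun t : ℝ => u k + t * d k := by continuity
    have h2 := this.tendsto 0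
    simp only [zero_mul, add_zero] at h2
    exact h2.mono_left nhdsWithin_le_nhds
  have ht0 : ∀ᶠ t : ℝ in 𝓝[>] 0, 0 < t := eventually_mem_nhdsWithin
  have ht12 : ∀ᶠ t : ℝ in 𝓝[>] 0, t ≤ 1 / 2 :=
    ((eventually_lt_nhds (show (0:ℝ) < 1/2 by norm_num)).mono
      fun _ h => h.le).filter_mono nhdsWithin_le_nhds
  rcases lt_trichotomy (u k) (γ * gradient g u k - γ * w k) with hlo | hlo | hlo
  · -- A⁻ zone
    rcases le_or_gt (u k) 0 with hp0 | hp0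
    · -- AmBar ⊆ ABar : m = -(q-c)
      have hmem : k ∈ ABar g γ w u :=
        Or.inr ⟨hlo, fun h => absurd hp0 (not_le.mpr h.1)⟩
      have hnew := hd.1 k hmem
      have hFue : Fm g γ w u k = γ * gradient g u k - γ * w k := by
        rw [hFu, min_eq_left (by linarith), max_eq_right hlo.le]
      rw [hFue] at hnew
      have hsm : ∀ᶠ t : ℝ in 𝓝[>] 0,
          u k + t * d k < γ * gradient g (u + t • d) k - γ * w k :=
        hP.eventually_lt (hT.sub_const _) hlo
      filter_upwards [ht0, ht12, hsm] with t h0 h12 hs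
      rw [hFt t, hFue]
      set r := γ * gradient g (u + t • d) k - γ * gradient g u k - t * (γ * hess g u d k)
        with hrdef
      have hQ : γ * gradient g (u + t • d) k
          = γ * gradient g u k + t * (γ * hess g u d k) + r := by rw [hrdef]; ring
      rw [hQ] at hs ⊢
      exact caseAminus hc (by linarith) (by linarith) hs
    · -- Amm ⊆ ImiBar
      have hmem : k ∈ ImiBar g γ w u := Or.inl (Or.inr ⟨hp0, hlo⟩)
      obtain ⟨hn1, hn2, hn3⟩ := hd.2.2.2 k hmem
      have hFue : Fm g γ w u k = max (u k) (γ * gradient g u k - γ * w k) := by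
        rw [hFu, min_eq_left (by linarith)]
      rw [hFue] at hn2 hn3
      have hcl : ∀ᶠ t : ℝ in 𝓝[>] 0,
          u k + t * d k < γ * gradient g (u + t • d) k + γ * w k :=
        hP.eventually_lt (hT.add_const _) (by linarith)
      filter_upwards [ht0, ht12, hcl] with t h0 h12 hs
      rw [hFt t, hFue]
      set r := γ * gradient g (u + t • d) k - γ * gradient g u k - t * (γ * hess g u d k)
        with hrdef
      have hQ : γ * gradient g (u + t • d) k
          = γ * gradient g u k + t * (γ * hess g u d k) + r := by rw [hrdef]; ring
      rw [hQ] at hs ⊢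
      exact caseImi hc (by linarith) hn1 (by linarith) (by linarith [hn3]) (Or.inl hp0.le)
        (Or.inl (max_eq_right hlo.le)) h0 h12 hs
  · -- I⁻ ⊆ ImiBar
    have hmem : k ∈ ImiBar g γ w u := Or.inl (Or.inl hlo)
    obtain ⟨hn1, hn2, hn3⟩ := hd.2.2.2 k hmem
    have hFue : Fm g γ w u k = max (u k) (γ * gradient g u k - γ * w k) := by
      rw [hFu, min_eq_left (by linarith)]
    rw [hFue] at hn2 hn3
    have hcl : ∀ᶠ t : ℝ in 𝓝[>] 0,
        u k + t * d k < γ * gradient g (u + t • d) k + γ * w k :=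
      hP.eventually_lt (hT.add_const _) (by linarith)
    filter_upwards [ht0, ht12, hcl] with t h0 h12 hs
    rw [hFt t, hFue]
    set r := γ * gradient g (u + t • d) k - γ * gradient g u k - t * (γ * hess g u d k)
      with hrdef
    have hQ : γ * gradient g (u + t • d) k
        = γ * gradient g u k + t * (γ * hess g u d k) + r := by rw [hrdef]; ring
    rw [hQ] at hs ⊢
    exact caseImi hc (by linarith) hn1 (by linarith) (by linarith [hn3])
      (Or.inr (max_eq_left hlo.ge)) (Or.inl (max_eq_right hlo.le)) h0 h12 hs
  · -- q - c < p
    rcases lt_trichotomy (u k) (γ * gradient g u k + γ * w k) with hhi | hhi | hhi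
    · -- interior I°
      rcases lt_or_ge (γ * gradient g u k + γ * w k) 0 with hqc | hqc
      · -- Izp ⊆ IplBar
        have hmem : k ∈ IplBar g γ w u := Or.inr ⟨hlo, hhi, hqc⟩
        obtain ⟨hn1, hn2, hn3⟩ := hd.2.2.1 k hmem
        have hFue : Fm g γ w u k = min (u k) (γ * gradient g u k + γ * w k) := by
          rw [hFu]
          exact max_eq_left (le_min hlo.le (by linarith))
        rw [hFue] at hn2 hn3
        have hcl : ∀ᶠ t : ℝ in 𝓝[>] 0,
            γ * gradient g (u + t • d) k - γ * w k < u k + t * d k :=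
          (hT.sub_const _).eventually_lt hP hlo
        filter_upwards [ht0, ht12, hcl] with t h0 h12 hs
        rw [hFt t, hFue]
        set r := γ * gradient g (u + t • d) k - γ * gradient g u k - t * (γ * hess g u d k)
          with hrdef
        have hQ : γ * gradient g (u + t • d) k
            = γ * gradient g u k + t * (γ * hess g u d k) + r := by rw [hrdef]; ring
        rw [hQ] at hs ⊢
        exact caseIpl hc hlo hn1 hn2 hn3 (Or.inr (min_eq_left hhi.le))
          (Or.inr hqc.le) h0 h12 hs
      · rcases lt_or_ge 0 (γ * gradient g u k - γ * w k) with hqm | hqm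
        · -- Izm ⊆ ImiBar
          have hmem : k ∈ ImiBar g γ w u := Or.inr ⟨hqm, hlo, hhi⟩
          obtain ⟨hn1, hn2, hn3⟩ := hd.2.2.2 k hmem
          have hFue : Fm g γ w u k = max (u k) (γ * gradient g u k - γ * w k) := by
            rw [hFu, min_eq_left hhi.le]
          rw [hFue] at hn2 hn3
          have hcl : ∀ᶠ t : ℝ in 𝓝[>] 0,
              u k + t * d k < γ * gradient g (u + t • d) k + γ * w k :=
            hP.eventually_lt (hT.add_const _) hhi
          filter_upwards [ht0, ht12, hcl] with t h0 h12 hs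
          rw [hFt t, hFue]
          set r := γ * gradient g (u + t • d) k - γ * gradient g u k - t * (γ * hess g u d k)
            with hrdef
          have hQ : γ * gradient g (u + t • d) k
              = γ * gradient g u k + t * (γ * hess g u d k) + r := by rw [hrdef]; ring
          rw [hQ] at hs ⊢
          exact caseImi hc hhi hn1 hn2 hn3 (Or.inr (max_eq_left hlo.le))
            (Or.inr hqm.le) h0 h12 hs
        · -- IzBar
          have hmem : k ∈ IzBar g γ w u := by
            refine ⟨⟨hlo, hhi⟩, ?_⟩
            rintro (h | h)
            · exact absurd h.2.2 (not_lt.mpr hqc)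
            · exact absurd h.1 (not_lt.mpr hqm)
          have hnew := hd.2.1 k hmem
          have hcl1 : ∀ᶠ t : ℝ in 𝓝[>] 0,
              γ * gradient g (u + t • d) k - γ * w k < u k + t * d k :=
            (hT.sub_const _).eventually_lt hP hlo
          have hcl2 : ∀ᶠ t : ℝ in 𝓝[>] 0,
              u k + t * d k < γ * gradient g (u + t • d) k + γ * w k :=
            hP.eventually_lt (hT.add_const _) hhi
          filter_upwards [ht0, ht12, hcl1, hcl2] with t h0 h12 hs1 hs2
          rw [hFt t, hFu]
          set r := γ * gradient g (u + t • d) k - γ * gradient g u k - t * (γ * hess g u d k)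
            with hrdef
          have hQ : γ * gradient g (u + t • d) k
              = γ * gradient g u k + t * (γ * hess g u d k) + r := by rw [hrdef]; ring
          rw [hQ] at hs1 hs2 ⊢
          exact caseIz hnew (by linarith) hs1 hs2 hlo hhi
    · -- I⁺ ⊆ IplBar
      have hmem : k ∈ IplBar g γ w u := Or.inl (Or.inl hhi)
      obtain ⟨hn1, hn2, hn3⟩ := hd.2.2.1 k hmem
      have hFue : Fm g γ w u k = min (u k) (γ * gradient g u k + γ * w k) := by
        rw [hFu]
        exact max_eq_left (le_min hlo.le (by linarith))
      rw [hFue] at hn2 hn3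
      have hcl : ∀ᶠ t : ℝ in 𝓝[>] 0,
          γ * gradient g (u + t • d) k - γ * w k < u k + t * d k :=
        (hT.sub_const _).eventually_lt hP hlo
      filter_upwards [ht0, ht12, hcl] with t h0 h12 hs
      rw [hFt t, hFue]
      set r := γ * gradient g (u + t • d) k - γ * gradient g u k - t * (γ * hess g u d k)
        with hrdef
      have hQ : γ * gradient g (u + t • d) k
          = γ * gradient g u k + t * (γ * hess g u d k) + r := by rw [hrdef]; ring
      rw [hQ] at hs ⊢
      exact caseIpl hc hlo hn1 hn2 hn3 (Or.inr (min_eq_left hhi.le))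
        (Or.inl (min_eq_right hhi.ge)) h0 h12 hs
    · -- A⁺ zone
      rcases lt_or_ge (u k) 0 with hp0 | hp0
      · -- App ⊆ IplBar
        have hmem : k ∈ IplBar g γ w u := Or.inl (Or.inr ⟨hhi, hp0⟩)
        obtain ⟨hn1, hn2, hn3⟩ := hd.2.2.1 k hmem
        have hFue : Fm g γ w u k = min (u k) (γ * gradient g u k + γ * w k) := by
          rw [hFu]
          exact max_eq_left (le_min hlo.le (by linarith))
        rw [hFue] at hn2 hn3
        have hcl : ∀ᶠ t : ℝ in 𝓝[>] 0,
            γ * gradient g (u + t • d) k - γ * w k < u k + t * d k :=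
          (hT.sub_const _).eventually_lt hP hlo
        filter_upwards [ht0, ht12, hcl] with t h0 h12 hs
        rw [hFt t, hFue]
        set r := γ * gradient g (u + t • d) k - γ * gradient g u k - t * (γ * hess g u d k)
          with hrdef
        have hQ : γ * gradient g (u + t • d) k
            = γ * gradient g u k + t * (γ * hess g u d k) + r := by rw [hrdef]; ring
        rw [hQ] at hs ⊢
        exact caseIpl hc hlo hn1 hn2 hn3 (Or.inl hp0.le)
          (Or.inl (min_eq_right hhi.le)) h0 h12 hs
      · -- ApBar ⊆ ABar
        have hmem : k ∈ ABar g γ w u :=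
          Or.inl ⟨hhi, fun h => absurd h.2 (not_lt.mpr hp0)⟩
        have hnew := hd.1 k hmem
        have hFue : Fm g γ w u k = γ * gradient g u k + γ * w k := by
          rw [hFu, min_eq_right hhi.le, max_eq_left (by linarith)]
        rw [hFue] at hnew
        have hbig : ∀ᶠ t : ℝ in 𝓝[>] 0,
            γ * gradient g (u + t • d) k + γ * w k < u k + t * d k :=
          (hT.add_const _).eventually_lt hP hhi
        filter_upwards [ht0, ht12, hbig] with t h0 h12 hs
        rw [hFt t, hFue]
        set r := γ * gradient g (u + t • d) k - γ * gradient g u k - t * (γ * hess g u d k)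
          with hrdef
        have hQ : γ * gradient g (u + t • d) k
            = γ * gradient g u k + t * (γ * hess g u d k) + r := by rw [hrdef]; ring
        rw [hQ] at hs ⊢
        exact caseAplus hc (by linarith) (by linarith) hs

end KeyLemma

set_option maxHeartbeats 2000000 in
/-- the Armijo stepsize is found after finitely many trials. -/
theorem stmt9 {n : ℕ} (hn : 1 ≤ n) (c₁ c₂ : ℝ) (g : Euc n → ℝ) (hg : Assump n g c₁ c₂)
    (w : Fin n → ℝ) (hw : ∀ k, 0 < w k) (γ : ℝ) (hγ : 0 < γ)
    (β σ : ℝ) (hβ : β ∈ Set.Ioo (0 : ℝ) 1) (hσ : σ ∈ Set.Ioo (0 : ℝ) (1 / 2))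
    (u d : Euc n) (hpos : 0 < Th g γ w u) (hd : IsModDir g γ w u d) :
    ∃ l : ℕ, Th g γ w (u + (β ^ l) • d) ≤ (1 - 2 * σ * β ^ l) * Th g γ w u := by
  obtain ⟨hβ0, hβ1⟩ := hβ
  obtain ⟨hσ0, hσ1⟩ := hσ
  have hg2 := hg.contDiff
  -- little-o expansion of the gradient along the line
  have hder := grad_line_deriv' g hg2 u d
  rw [hasDerivAt_iff_isLittleO] at hder
  simp only [zero_smul, add_zero, sub_zero] at hder
  have hrk : ∀ ε : ℝ, 0 < ε → ∀ᶠ t in 𝓝[>] (0:ℝ), ∀ k,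
      |γ * gradient g (u + t • d) k - γ * gradient g u k - t * (γ * hess g u d k)|
        ≤ ε * t := by
    intro ε hε
    have hε' : 0 < ε / γ := div_pos hε hγ
    have h2 := (Asymptotics.isLittleO_iff.mp hder) hε'
    have h3 := h2.filter_mono (nhdsWithin_le_nhds (s := Set.Ioi (0:ℝ)))
    filter_upwards [h3, eventually_mem_nhdsWithin] with t hb hmem k
    have ht : 0 < t := hmem
    have hbb : ‖gradient g (u + t • d) - gradient g u - t • hess g u d‖ ≤ ε / γ * ‖t‖ := hb
    have hcomp : |(gradient g (u + t • d) - gradient g u - t • hess g u d) k|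
        ≤ ‖gradient g (u + t • d) - gradient g u - t • hess g u d‖ := comp_le_norm' _ k
    have happly : (gradient g (u + t • d) - gradient g u - t • hess g u d) k
        = gradient g (u + t • d) k - gradient g u k - t * hess g u d k := by
      simp [PiLp.sub_apply, PiLp.smul_apply]
    have heq : γ * gradient g (u + t • d) k - γ * gradient g u k - t * (γ * hess g u d k)
        = γ * ((gradient g (u + t • d) - gradient g u - t • hess g u d) k) := by
      rw [happly]; ring
    rw [heq, abs_mul, abs_of_pos hγ]
    calc γ * |(gradient g (u + t • d) - gradient g u - t • hess g u d) k|
        ≤ γ * (ε / γ * ‖t‖) :=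
          mul_le_mul_of_nonneg_left (hcomp.trans hbb) hγ.le
      _ = ε * t := by
          rw [Real.norm_eq_abs, abs_of_pos ht]; field_simp
  have hkeyall : ∀ᶠ t in 𝓝[>] (0:ℝ), ∀ k,
      |Fm g γ w (u + t • d) k| ≤ (1 - t) * |Fm g γ w u k|
        + |γ * gradient g (u + t • d) k - γ * gradient g u k - t * (γ * hess g u d k)| :=
    eventually_all.mpr fun k => key_component hγ hw hg2 hd k
  have ht12 : ∀ᶠ t : ℝ in 𝓝[>] 0, t ≤ 1 / 2 :=
    ((eventually_lt_nhds (show (0:ℝ) < 1/2 by norm_num)).mono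
      fun _ h => h.le).filter_mono nhdsWithin_le_nhds
  set Θ := Th g γ w u with hΘdef
  have hΘsum : Θ = ∑ k, (Fm g γ w u k) ^ 2 := Th_sum g γ w u
  set C := ∑ k, |Fm g γ w u k| with hCdef
  have hC0 : 0 ≤ C := Finset.sum_nonneg fun k _ => abs_nonneg _
  have hden : (0:ℝ) < 4 * (2 * C + n + 1) := by positivity
  set ε := min 1 (Θ / (4 * (2 * C + n + 1))) with hεdef
  have hε0 : 0 < ε := lt_min one_pos (div_pos hpos hden)
  have hε1 : ε ≤ 1 := min_le_left _ _
  have hεΘ : ε * (4 * (2 * C + n + 1)) ≤ Θ := by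
    have h1 := min_le_right 1 (Θ / (4 * (2 * C + n + 1)))
    calc ε * (4 * (2 * C + n + 1)) ≤ Θ / (4 * (2 * C + n + 1)) * (4 * (2 * C + n + 1)) :=
          mul_le_mul_of_nonneg_right h1 hden.le
      _ = Θ := div_mul_cancel₀ _ hden.ne'
  have hPev : ∀ᶠ t in 𝓝[>] (0:ℝ),
      Th g γ w (u + t • d) ≤ (1 - 2 * σ * t) * Θ := by
    filter_upwards [hkeyall, hrk ε hε0, eventually_mem_nhdsWithin, ht12]
      with t hk hr hmem h12
    have ht : 0 < t := hmem
    have hεt : ε * t ≤ 1 := by nlinarith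
    have hboundk : ∀ k, (Fm g γ w (u + t • d) k) ^ 2
        ≤ (1 - t) ^ 2 * (Fm g γ w u k) ^ 2 + 2 * (ε * t) * |Fm g γ w u k| + (ε * t) ^ 2 := by
      intro k
      have hb : |Fm g γ w (u + t • d) k| ≤ (1 - t) * |Fm g γ w u k| + ε * t :=
        (hk k).trans (by linarith [hr k])
      have h2 : |Fm g γ w (u + t • d) k| ^ 2
          ≤ ((1 - t) * |Fm g γ w u k| + ε * t) ^ 2 :=
        pow_le_pow_left₀ (abs_nonneg _) hb 2
      rw [sq_abs] at h2
      nlinarith [sq_abs (Fm g γ w u k), abs_nonneg (Fm g γ w u k),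
        mul_nonneg (mul_nonneg hε0.le ht.le) (abs_nonneg (Fm g γ w u k))]
    have hsum2 : ∑ k, ((1 - t) ^ 2 * (Fm g γ w u k) ^ 2 + 2 * (ε * t) * |Fm g γ w u k|
        + (ε * t) ^ 2) = (1 - t) ^ 2 * Θ + 2 * (ε * t) * C + n * (ε * t) ^ 2 := by
      rw [hΘsum, hCdef, Finset.sum_add_distrib, Finset.sum_add_distrib, ← Finset.mul_sum,
        ← Finset.mul_sum, Finset.sum_const, Finset.card_univ, Fintype.card_fin, nsmul_eq_mul]
    have htΘ : t * (ε * (4 * (2 * C + n + 1))) ≤ t * Θ :=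
      mul_le_mul_of_nonneg_left hεΘ ht.le
    have h4 : t * Θ * (1 / 2) ≤ t * Θ * (2 - t - 2 * σ) :=
      mul_le_mul_of_nonneg_left (by linarith) (mul_nonneg ht.le hpos.le)
    calc Th g γ w (u + t • d) = ∑ k, (Fm g γ w (u + t • d) k) ^ 2 := Th_sum g γ w _
      _ ≤ ∑ k, ((1 - t) ^ 2 * (Fm g γ w u k) ^ 2 + 2 * (ε * t) * |Fm g γ w u k|
          + (ε * t) ^ 2) := Finset.sum_le_sum fun k _ => hboundk k
      _ = (1 - t) ^ 2 * Θ + 2 * (ε * t) * C + n * (ε * t) ^ 2 := hsum2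
      _ ≤ (1 - 2 * σ * t) * Θ := by
          have hn0 : (0:ℝ) ≤ (n:ℝ) := Nat.cast_nonneg n
          have hεt0 : (0:ℝ) ≤ ε * t := mul_nonneg hε0.le ht.le
          have h6 : (ε * t) ^ 2 ≤ ε * t := by nlinarith
          have h5 : (n:ℝ) * (ε * t) ^ 2 ≤ n * (ε * t) := mul_le_mul_of_nonneg_left h6 hn0
          nlinarith [mul_nonneg (mul_nonneg hε0.le ht.le) hC0,
            mul_nonneg (mul_nonneg hε0.le ht.le) hn0]
  have hβt : Tendsto (fun l : ℕ => β ^ l) atTop (𝓝[>] (0:ℝ)) :=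
    tendsto_nhdsWithin_iff.mpr
      ⟨tendsto_pow_atTop_nhds_zero_of_lt_one hβ0.le hβ1,
        Eventually.of_forall fun l => pow_pos hβ0 l⟩
  obtain ⟨l, hl⟩ := (hβt.eventually hPev).exists
  exact ⟨l, hl⟩
end
end
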